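/- For every positive integer n, a(n) ≤ i(n) ≤ a(n) + 1, and both a(n) and i(n) lie in the interval [0, n]. -/
import Mathlib


theorem stmt_19
    (i a : ℕ → ℚ)
    (ha0 : a 0 = 0) (hi1 : i 1 = 1) (ha1 : a 1 = 0)
    (ha : ∀ n : ℕ, 2 ≤ n → a n = (i (n - 1) + a (n - 1)) / 2)
    (hi23 : ∀ n : ℕ, 2 ≤ n → n ≤ 3 → i n = i (n - 1))
    (hi4 : i 4 = (i 1 + a 1 + i 2 + a 2) / 2)
    (hi5 : ∀ n : ℕ, 5 ≤ n → i n = (i 2 + a 2 + i (n - 3) + a (n - 3)) / 2) :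
    ∀ n : ℕ, 1 ≤ n →
      a n ≤ i n ∧ i n ≤ a n + 1 ∧ 0 ≤ a n ∧ a n ≤ n ∧ 0 ≤ i n ∧ i n ≤ n := by
  have hi2 : i 2 = 1 := by have := hi23 2 (by norm_num) (by norm_num); simpa [hi1] using this
  have ha2 : a 2 = 1/2 := by have := ha 2 (by norm_num); rw [this]; norm_num [hi1, ha1]
  have hi3 : i 3 = 1 := by have := hi23 3 (by norm_num) (by norm_num); simpa [hi2] using this
  have ha3 : a 3 = 3/4 := by have := ha 3 (by norm_num); rw [this]; norm_num [hi2, ha2]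
  have hi4' : i 4 = 5/4 := by rw [hi4]; norm_num [hi1, ha1, hi2, ha2]
  have ha4 : a 4 = 7/8 := by have := ha 4 (by norm_num); rw [this]; norm_num [hi3, ha3]
  have hi5' : i 5 = 3/2 := by have := hi5 5 (by norm_num); rw [this]; norm_num [hi2, ha2]
  have ha5 : a 5 = 17/16 := by have := ha 5 (by norm_num); rw [this]; norm_num [hi4', ha4]
  set Q : ℕ → Prop := fun n => 0 ≤ a n ∧ a n ≤ i n ∧ i n ≤ a n + 1 ∧ i n + a n ≤ (n : ℚ) ∧
      i n + a n ≤ i (n+1) + a (n+1) ∧ i (n+1) + a (n+1) ≤ i n + a n + 3/4 with hQ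
  have key : ∀ n : ℕ, Q (n+1) := by
    intro n
    induction n using Nat.strong_induction_on with
    | _ n ih =>
      match n with
      | 0 => refine ⟨?_, ?_, ?_, ?_, ?_, ?_⟩ <;> norm_num [hi1, ha1, hi2, ha2]
      | 1 => refine ⟨?_, ?_, ?_, ?_, ?_, ?_⟩ <;> norm_num [hi2, ha2, hi3, ha3]
      | 2 => refine ⟨?_, ?_, ?_, ?_, ?_, ?_⟩ <;> norm_num [hi3, ha3, hi4', ha4]
      | 3 => refine ⟨?_, ?_, ?_, ?_, ?_, ?_⟩ <;> norm_num [hi4', ha4, hi5', ha5]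
      | (m+4) =>
        obtain ⟨h1a, h1b, h1c, h1d, h1e, h1f⟩ := ih (m+3) (by omega)
        obtain ⟨h2a, h2b, h2c, h2d, h2e, h2f⟩ := ih (m+2) (by omega)
        obtain ⟨h3a, h3b, h3c, h3d, h3e, h3f⟩ := ih (m+1) (by omega)
        have hA5 : a (m+5) = (i (m+4) + a (m+4)) / 2 := by
          have := ha (m+5) (by omega)
          simpa using this
        have hI5 : i (m+5) = (3/2 + i (m+2) + a (m+2)) / 2 := by
          have h := hi5 (m+5) (by omega)
          have e : m+5-3 = m+2 := by omega
          rw [e] at h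
          rw [h, hi2, ha2]; ring
        have hA6 : a (m+6) = (i (m+5) + a (m+5)) / 2 := by
          have := ha (m+6) (by omega)
          simpa using this
        have hI6 : i (m+6) = (3/2 + i (m+3) + a (m+3)) / 2 := by
          have h := hi5 (m+6) (by omega)
          have e : m+6-3 = m+3 := by omega
          rw [e] at h
          rw [h, hi2, ha2]; ring
        have hcast : ((m:ℚ)+4) + 1 = ((m+5 : ℕ) : ℚ) := by push_cast; ring
        refine ⟨?_, ?_, ?_, ?_, ?_, ?_⟩
        · rw [hA5]; linarith
        · rw [hA5, hI5]; linarith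
        · rw [hA5, hI5]; linarith
        · rw [hA5, hI5]; push_cast; push_cast at h1d h2d; linarith
        · rw [hA5, hI5, hA6, hI6]; linarith
        · rw [hA5, hI5, hA6, hI6]; linarith
  intro n hn
  obtain ⟨k, rfl⟩ : ∃ k, n = k + 1 := ⟨n - 1, by omega⟩
  obtain ⟨h1, h2, h3, h4, h5, h6⟩ := key k
  refine ⟨h2, h3, h1, by linarith, by linarith, by linarith⟩
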